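/- (Theorem 1, first covariance relation.) Let D ⊆ ℂ be open, let B, Ψ, F, F⁺, ω_{F,F⁺}, ω_{Ψ,F⁺} : D → Matrix (Fin N) (Fin N) ℂ be real-differentiable, and assume on D: (i) ∂_z̄ Ψ + B·conj(Ψ) = 0 and ∂_z̄ F + B·conj(F) = 0; (ii) ∂_z F⁺ − conj(F⁺)·B = 0; (iii) ∂_z̄ ω_{F,F⁺} = F⁺·conj(F), ∂_z ω_{F,F⁺} = − conj(F⁺)·F, and conj(ω_{F,F⁺}) = − ω_{F,F⁺} (pure imaginary); (iv) ∂_z̄ ω_{Ψ,F⁺} = F⁺·conj(Ψ), ∂_z ω_{Ψ,F⁺} = − conj(F⁺)·Ψ, and conj(ω_{Ψ,F⁺}) = − ω_{Ψ,F⁺}; (v) ω_{F,F⁺}(z) is invertible for every z ∈ D. Define Ψ̃ = Ψ − F · ω_{F,F⁺}⁻¹ · ω_{Ψ,F⁺} and B̃ = B + F · ω_{F,F⁺}⁻¹ · F⁺. Then ∂_z̄ Ψ̃ + B̃ · conj(Ψ̃) = 0 on D. -/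

import Mathlib

open Complex Matrix

/-- Entrywise Wirtinger derivative ∂_z f = (1/2)(∂f/∂x − i ∂f/∂y). -/
noncomputable def wDz {N : ℕ} (f : ℂ → Matrix (Fin N) (Fin N) ℂ) (z : ℂ) :
    Matrix (Fin N) (Fin N) ℂ :=
  Matrix.of fun i j =>
    (1 / 2 : ℂ) * (fderiv ℝ (fun w => f w i j) z 1
      - Complex.I * fderiv ℝ (fun w => f w i j) z Complex.I)

/-- Entrywise Wirtinger derivative ∂_z̄ f = (1/2)(∂f/∂x + i ∂f/∂y). -/
noncomputable def wDzbar {N : ℕ} (f : ℂ → Matrix (Fin N) (Fin N) ℂ) (z : ℂ) :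
    Matrix (Fin N) (Fin N) ℂ :=
  Matrix.of fun i j =>
    (1 / 2 : ℂ) * (fderiv ℝ (fun w => f w i j) z 1
      + Complex.I * fderiv ℝ (fun w => f w i j) z Complex.I)

/-- Real-differentiability, entrywise, at every point of `D`. -/
def MatDiffOn {N : ℕ} (f : ℂ → Matrix (Fin N) (Fin N) ℂ) (D : Set ℂ) : Prop :=
  ∀ z ∈ D, ∀ i j, DifferentiableAt ℝ (fun w => f w i j) z

/-- Entrywise complex conjugate of a matrix. -/
def mconj {N : ℕ} (M : Matrix (Fin N) (Fin N) ℂ) : Matrix (Fin N) (Fin N) ℂ :=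
  M.map (starRingEnd ℂ)

/-- scalar Wirtinger ∂̄ -/
noncomputable def sDzbar (f : ℂ → ℂ) (z : ℂ) : ℂ :=
  (1 / 2 : ℂ) * (fderiv ℝ f z 1 + Complex.I * fderiv ℝ f z Complex.I)

lemma sDzbar_mul {f g : ℂ → ℂ} {z : ℂ} (hf : DifferentiableAt ℝ f z)
    (hg : DifferentiableAt ℝ g z) :
    sDzbar (fun w => f w * g w) z = sDzbar f z * g z + f z * sDzbar g z := by
  unfold sDzbar
  rw [fderiv_fun_mul hf hg]
  simp [smul_eq_mul]
  ring

lemma sDzbar_sum {ι : Type*} {s : Finset ι} {f : ι → ℂ → ℂ} {z : ℂ}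
    (h : ∀ i ∈ s, DifferentiableAt ℝ (f i) z) :
    sDzbar (fun w => ∑ i ∈ s, f i w) z = ∑ i ∈ s, sDzbar (f i) z := by
  unfold sDzbar
  rw [fderiv_fun_sum h]
  simp only [ContinuousLinearMap.coe_sum', Finset.sum_apply, Finset.mul_sum,
    ← Finset.sum_add_distrib]

lemma prod_diff {ι : Type*} {s : Finset ι} {f : ι → ℂ → ℂ} {z : ℂ}
    (h : ∀ i ∈ s, DifferentiableAt ℝ (f i) z) :
    DifferentiableAt ℝ (fun w => ∏ i ∈ s, f i w) z := by
  classical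
  induction s using Finset.cons_induction with
  | empty => simp only [Finset.prod_empty]; exact differentiableAt_const (1 : ℂ)
  | cons a s ha ih =>
    simp only [Finset.prod_cons]
    exact (h a (Finset.mem_cons_self a s)).mul
      (ih fun i hi => h i (Finset.mem_cons_of_mem hi))

lemma det_diff {N : ℕ} {M : ℂ → Matrix (Fin N) (Fin N) ℂ} {z : ℂ}
    (h : ∀ i j, DifferentiableAt ℝ (fun w => M w i j) z) :
    DifferentiableAt ℝ (fun w => (M w).det) z := by
  have e : (fun w => (M w).det)
      = fun w => ∑ σ : Equiv.Perm (Fin N),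
          ((Equiv.Perm.sign σ : ℤ) : ℂ) * ∏ i, M w (σ i) i := by
    ext w; rw [Matrix.det_apply']
  rw [e]
  exact DifferentiableAt.fun_sum fun σ _ =>
    (prod_diff fun i _ => h (σ i) i).const_mul _


lemma adj_diff {N : ℕ} {M : ℂ → Matrix (Fin N) (Fin N) ℂ} {z : ℂ}
    (h : ∀ i j, DifferentiableAt ℝ (fun w => M w i j) z) (i j : Fin N) :
    DifferentiableAt ℝ (fun w => (M w).adjugate i j) z := by
  have e : (fun w => (M w).adjugate i j)
      = fun w => ((M w).updateRow j (Pi.single i 1)).det := by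
    ext w; rw [Matrix.adjugate_apply]
  rw [e]
  apply det_diff
  intro a b
  rcases eq_or_ne a j with rfl | ha
  · simp only [Matrix.updateRow_apply, if_pos rfl]
    exact differentiableAt_const _
  · simp only [Matrix.updateRow_apply, if_neg ha]
    exact h a b

lemma inv_entry_diff {N : ℕ} {M : ℂ → Matrix (Fin N) (Fin N) ℂ} {z : ℂ}
    (h : ∀ i j, DifferentiableAt ℝ (fun w => M w i j) z)
    (hu : IsUnit (M z)) (i j : Fin N) :
    DifferentiableAt ℝ (fun w => (M w)⁻¹ i j) z := by
  have e : (fun w => (M w)⁻¹ i j)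
      = fun w => ((M w).det)⁻¹ * (M w).adjugate i j := by
    ext w
    rw [Matrix.inv_def, Ring.inverse_eq_inv]
    simp [Matrix.smul_apply, smul_eq_mul]
  rw [e]
  have hdet : DifferentiableAt ℝ (fun w => (M w).det) z := det_diff h
  have hne : (M z).det ≠ 0 := by
    have := (Matrix.isUnit_iff_isUnit_det _).mp hu
    simpa [isUnit_iff_ne_zero] using this
  have hinv : DifferentiableAt ℝ (fun w => ((M w).det)⁻¹) z := by
    have h1 : DifferentiableAt ℂ (Inv.inv : ℂ → ℂ) ((M z).det) :=
      differentiableAt_inv hne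
    exact (h1.restrictScalars ℝ).comp z hdet
  exact hinv.mul (adj_diff h i j)

lemma wDzbar_apply {N : ℕ} (f : ℂ → Matrix (Fin N) (Fin N) ℂ) (z : ℂ) (i j : Fin N) :
    wDzbar f z i j = sDzbar (fun w => f w i j) z := rfl

lemma wDzbar_congr {N : ℕ} {f g : ℂ → Matrix (Fin N) (Fin N) ℂ} {z : ℂ}
    (h : f =ᶠ[nhds z] g) : wDzbar f z = wDzbar g z := by
  ext i j
  have h' : (fun w => f w i j) =ᶠ[nhds z] fun w => g w i j :=
    h.mono fun w hw => by simp only [hw]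
  simp only [wDzbar_apply, sDzbar, h'.fderiv_eq]

lemma wDzbar_const {N : ℕ} (M : Matrix (Fin N) (Fin N) ℂ) (z : ℂ) :
    wDzbar (fun _ => M) z = 0 := by
  ext i j
  simp [wDzbar_apply, sDzbar]

lemma wDzbar_sub {N : ℕ} {f g : ℂ → Matrix (Fin N) (Fin N) ℂ} {z : ℂ}
    (hf : ∀ i j, DifferentiableAt ℝ (fun w => f w i j) z)
    (hg : ∀ i j, DifferentiableAt ℝ (fun w => g w i j) z) :
    wDzbar (fun w => f w - g w) z = wDzbar f z - wDzbar g z := by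
  ext i j
  have e : (fun w => (f w - g w) i j) = fun w => f w i j - g w i j := by
    ext w; simp [Matrix.sub_apply]
  simp only [wDzbar_apply, Matrix.sub_apply, sDzbar, e, fderiv_fun_sub (hf i j) (hg i j)]
  simp
  ring

lemma wDzbar_mul {N : ℕ} {f g : ℂ → Matrix (Fin N) (Fin N) ℂ} {z : ℂ}
    (hf : ∀ i j, DifferentiableAt ℝ (fun w => f w i j) z)
    (hg : ∀ i j, DifferentiableAt ℝ (fun w => g w i j) z) :
    wDzbar (fun w => f w * g w) z = wDzbar f z * g z + f z * wDzbar g z := by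
  ext i j
  have e : (fun w => (f w * g w) i j) = fun w => ∑ k, f w i k * g w k j := by
    ext w; rw [Matrix.mul_apply]
  rw [wDzbar_apply, e, sDzbar_sum (fun k _ => (hf i k).fun_mul (hg k j))]
  simp only [Matrix.add_apply, Matrix.mul_apply, wDzbar_apply]
  rw [← Finset.sum_add_distrib]
  exact Finset.sum_congr rfl fun k _ => sDzbar_mul (hf i k) (hg k j)

lemma mconj_mul {N : ℕ} (A C : Matrix (Fin N) (Fin N) ℂ) :
    mconj (A * C) = mconj A * mconj C := by
  simp [mconj, Matrix.map_mul]

lemma mconj_sub {N : ℕ} (A C : Matrix (Fin N) (Fin N) ℂ) :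
    mconj (A - C) = mconj A - mconj C := by
  ext i j; simp [mconj, map_sub]

lemma mconj_one {N : ℕ} : mconj (1 : Matrix (Fin N) (Fin N) ℂ) = 1 := by
  ext i j
  simp [mconj, Matrix.one_apply, apply_ite]


lemma mul_entry_diff {N : ℕ} {f g : ℂ → Matrix (Fin N) (Fin N) ℂ} {z : ℂ}
    (hf : ∀ i j, DifferentiableAt ℝ (fun w => f w i j) z)
    (hg : ∀ i j, DifferentiableAt ℝ (fun w => g w i j) z) (i j : Fin N) :
    DifferentiableAt ℝ (fun w => (f w * g w) i j) z := by
  have e : (fun w => (f w * g w) i j) = fun w => ∑ k, f w i k * g w k j := by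
    ext w; rw [Matrix.mul_apply]
  rw [e]
  exact DifferentiableAt.fun_sum fun k _ => (hf i k).fun_mul (hg k j)

/-- Theorem 1, first covariance relation:
Ψ̃ = Ψ − F·ω_{F,F⁺}⁻¹·ω_{Ψ,F⁺} satisfies ∂_z̄ Ψ̃ + B̃·conj Ψ̃ = 0 with
B̃ = B + F·ω_{F,F⁺}⁻¹·F⁺. -/
theorem moutard_covariance_first {N : ℕ} (D : Set ℂ) (hD : IsOpen D)
    (B Ψ F Fp ωFF ωΨF : ℂ → Matrix (Fin N) (Fin N) ℂ)
    (hB : MatDiffOn B D) (hΨ : MatDiffOn Ψ D) (hF : MatDiffOn F D)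
    (hFp : MatDiffOn Fp D) (hωFF : MatDiffOn ωFF D) (hωΨF : MatDiffOn ωΨF D)
    (hΨsys : ∀ z ∈ D, wDzbar Ψ z + B z * mconj (Ψ z) = 0)
    (hFsys : ∀ z ∈ D, wDzbar F z + B z * mconj (F z) = 0)
    (hFpsys : ∀ z ∈ D, wDz Fp z - mconj (Fp z) * B z = 0)
    (hωFFzbar : ∀ z ∈ D, wDzbar ωFF z = Fp z * mconj (F z))
    (hωFFz : ∀ z ∈ D, wDz ωFF z = - (mconj (Fp z) * F z))
    (hωFFim : ∀ z ∈ D, mconj (ωFF z) = - ωFF z)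
    (hωΨFzbar : ∀ z ∈ D, wDzbar ωΨF z = Fp z * mconj (Ψ z))
    (hωΨFz : ∀ z ∈ D, wDz ωΨF z = - (mconj (Fp z) * Ψ z))
    (hωΨFim : ∀ z ∈ D, mconj (ωΨF z) = - ωΨF z)
    (hinv : ∀ z ∈ D, IsUnit (ωFF z)) :
    ∀ z ∈ D,
      wDzbar (fun w => Ψ w - F w * (ωFF w)⁻¹ * ωΨF w) z
        + (B z + F z * (ωFF z)⁻¹ * Fp z)
          * mconj (Ψ z - F z * (ωFF z)⁻¹ * ωΨF z) = 0 := by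
  intro z hz
  have hdetU : IsUnit (ωFF z).det := (Matrix.isUnit_iff_isUnit_det _).mp (hinv z hz)
  have hdetne : (ωFF z).det ≠ 0 := by
    simpa [isUnit_iff_ne_zero] using hdetU
  have hdo : ∀ i j, DifferentiableAt ℝ (fun w => (ωFF w)⁻¹ i j) z :=
    inv_entry_diff (hωFF z hz) (hinv z hz)
  have hdetdiff : DifferentiableAt ℝ (fun w => (ωFF w).det) z := det_diff (hωFF z hz)
  have hev : ∀ᶠ w in nhds z, (ωFF w).det ≠ 0 :=
    hdetdiff.continuousAt.eventually_ne hdetne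
  have hev1 : (fun w => ωFF w * (ωFF w)⁻¹) =ᶠ[nhds z] (fun _ => 1) :=
    hev.mono fun w hw => Matrix.mul_nonsing_inv _ (isUnit_iff_ne_zero.mpr hw)
  have h0 : wDzbar (fun w => ωFF w * (ωFF w)⁻¹) z = 0 := by
    rw [wDzbar_congr hev1, wDzbar_const]
  have hmul := wDzbar_mul (hωFF z hz) hdo
  rw [h0] at hmul
  rw [hωFFzbar z hz] at hmul
  -- derivative of the inverse
  have hDinv : wDzbar (fun w => (ωFF w)⁻¹) z
      = -((ωFF z)⁻¹ * (Fp z * mconj (F z)) * (ωFF z)⁻¹) := by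
    have h1 : ωFF z * wDzbar (fun w => (ωFF w)⁻¹) z
        = -(Fp z * mconj (F z) * (ωFF z)⁻¹) := by
      have h2 : Fp z * mconj (F z) * (ωFF z)⁻¹
          + ωFF z * wDzbar (fun w => (ωFF w)⁻¹) z = 0 := hmul.symm
      linear_combination (norm := abel) h2
    calc wDzbar (fun w => (ωFF w)⁻¹) z
        = (ωFF z)⁻¹ * (ωFF z * wDzbar (fun w => (ωFF w)⁻¹) z) := by
          rw [← mul_assoc, Matrix.nonsing_inv_mul _ hdetU, one_mul]
      _ = -((ωFF z)⁻¹ * (Fp z * mconj (F z)) * (ωFF z)⁻¹) := by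
          rw [h1]; noncomm_ring
  -- conjugate of the inverse
  have hco : mconj ((ωFF z)⁻¹) = -(ωFF z)⁻¹ := by
    have h1 : mconj ((ωFF z)⁻¹) * mconj (ωFF z) = 1 := by
      rw [← mconj_mul, Matrix.nonsing_inv_mul _ hdetU, mconj_one]
    rw [hωFFim z hz] at h1
    have h2 : (-(mconj ((ωFF z)⁻¹))) * ωFF z = 1 := by
      rw [neg_mul, ← mul_neg]; exact h1
    linear_combination (norm := abel) Matrix.inv_eq_left_inv h2
  -- derivative of tilde Ψ
  have hFo := mul_entry_diff (hF z hz) hdo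
  have hFoρ := mul_entry_diff hFo (hωΨF z hz)
  have hstep1 : wDzbar (fun w => Ψ w - F w * (ωFF w)⁻¹ * ωΨF w) z
      = wDzbar Ψ z - wDzbar (fun w => F w * (ωFF w)⁻¹ * ωΨF w) z :=
    wDzbar_sub (hΨ z hz) hFoρ
  have hstep2 : wDzbar (fun w => F w * (ωFF w)⁻¹ * ωΨF w) z
      = wDzbar (fun w => F w * (ωFF w)⁻¹) z * ωΨF z
        + (F z * (ωFF z)⁻¹) * wDzbar ωΨF z :=
    wDzbar_mul hFo (hωΨF z hz)
  have hstep3 : wDzbar (fun w => F w * (ωFF w)⁻¹) z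
      = wDzbar F z * (ωFF z)⁻¹ + F z * wDzbar (fun w => (ωFF w)⁻¹) z :=
    wDzbar_mul (hF z hz) hdo
  have hΨval : wDzbar Ψ z = -(B z * mconj (Ψ z)) := by
    have := hΨsys z hz; linear_combination (norm := abel) this
  have hFval : wDzbar F z = -(B z * mconj (F z)) := by
    have := hFsys z hz; linear_combination (norm := abel) this
  rw [hstep1, hstep2, hstep3, hDinv, hΨval, hFval, hωΨFzbar z hz,
    mconj_sub, mconj_mul, mconj_mul, hco, hωΨFim z hz]
  noncomm_ring
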